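/- Normalized packing corollary. Under the setup of the normalized packing invariant (m ≥ 1, ε > 0, points x_1,…,x_s ∈ P with 0 ≤ f_j(x_ℓ) ≤ 1, weights Y_j(t) = ∏_{ℓ≤t}(1 + ε f_j(x_ℓ)), dual values v_t with average v̄, and λ̄ = max_j (1/s) Σ_ℓ f_j(x_ℓ)), suppose additionally that λ* > 0 is a real with λ* ≤ λ̄ and s ≥ (1+ε)·ln(m) / (λ*·b(ε)), where b(ε) = (1+ε)ln(1+ε) − ε. Then λ̄ ≤ (1+ε)·v̄. -/

import Mathlib

/-- **Packing corollary** (normalized, Corollary 8 of the paper).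
Under the setup of the packing invariant, if `0 < lamstar ≤ lambar` and
`s ≥ (1+ε)·ln m / (lamstar·b(ε))` with `b(ε) = (1+ε)ln(1+ε) − ε`, then
`lambar ≤ (1+ε)·vbar`. -/
theorem packing_duality_gap (n m s : ℕ) (hm : 1 ≤ m)
    (ε : ℝ) (hε : 0 < ε)
    (P : Set (Fin n → ℝ)) (f : (Fin n → ℝ) → Fin m → ℝ)
    (hf : ∀ x ∈ P, ∀ j, f x j ∈ Set.Icc (0 : ℝ) 1)
    (x : ℕ → Fin n → ℝ) (hx : ∀ ℓ < s, x ℓ ∈ P)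
    (Y : ℕ → Fin m → ℝ)
    (hY : ∀ t, ∀ j, Y t j = ∏ ℓ ∈ Finset.range t, (1 + ε * f (x ℓ) j))
    (v : ℕ → ℝ)
    (hv : ∀ t < s, v t = (∑ j, Y t j * f (x t) j) / (∑ j, Y t j))
    (vbar lambar : ℝ)
    (hvbar : vbar = (1 / (s : ℝ)) * ∑ t ∈ Finset.range s, v t)
    (hlambar : lambar = ⨆ j, (1 / (s : ℝ)) * ∑ ℓ ∈ Finset.range s, f (x ℓ) j)
    (lamstar : ℝ) (hlamstar : 0 < lamstar) (hle : lamstar ≤ lambar)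
    (hs : (1 + ε) * Real.log m / (lamstar * ((1 + ε) * Real.log (1 + ε) - ε))
            ≤ (s : ℝ)) :
    lambar ≤ (1 + ε) * vbar := by
  haveI : Nonempty (Fin m) := Fin.pos_iff_nonempty.mp hm
  have h1ε : (0:ℝ) < 1 + ε := by linarith
  -- dispatch s = 0
  rcases Nat.eq_zero_or_pos s with rfl | hspos
  · exfalso
    have : lambar = 0 := by
      rw [hlambar]
      simp
    linarith
  have hsR : (0:ℝ) < (s:ℝ) := by exact_mod_cast hspos
  -- b(ε) > 0
  have hb : ε / (1 + ε) < Real.log (1 + ε) := by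
    have h := Real.log_lt_sub_one_of_pos (x := 1 / (1 + ε)) (by positivity)
      (by
        intro h
        have : (1:ℝ) + ε = 1 := by field_simp at h; linarith
        linarith)
    rw [Real.log_div one_ne_zero (by linarith), Real.log_one] at h
    have : 1 / (1 + ε) - 1 = -(ε / (1 + ε)) := by field_simp; ring
    linarith [h.trans_le (le_of_eq this)]
  have hbpos : 0 < (1 + ε) * Real.log (1 + ε) - ε := by
    have := (div_lt_iff₀ h1ε).mp hb
    linarith
  -- bounds on f at the used points
  have hf0 : ∀ ℓ < s, ∀ j, 0 ≤ f (x ℓ) j := fun ℓ hℓ j => (hf _ (hx ℓ hℓ) j).1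
  have hf1 : ∀ ℓ < s, ∀ j, f (x ℓ) j ≤ 1 := fun ℓ hℓ j => (hf _ (hx ℓ hℓ) j).2
  -- positivity of Y
  have hYpos : ∀ t ≤ s, ∀ j, 0 < Y t j := by
    intro t ht j
    rw [hY]
    apply Finset.prod_pos
    intro ℓ hℓ
    have := hf0 ℓ (lt_of_lt_of_le (Finset.mem_range.mp hℓ) ht) j
    nlinarith
  have hSpos : ∀ t ≤ s, 0 < ∑ j, Y t j :=
    fun t ht => Finset.sum_pos (fun j _ => hYpos t ht j) Finset.univ_nonempty
  -- v nonneg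
  have hvnn : ∀ t < s, 0 ≤ v t := by
    intro t ht
    rw [hv t ht]
    apply div_nonneg _ (hSpos t ht.le).le
    exact Finset.sum_nonneg fun j _ => mul_nonneg (hYpos t ht.le j).le (hf0 t ht j)
  -- lower bound on log (Y s j)
  have hlow : ∀ j, (∑ ℓ ∈ Finset.range s, f (x ℓ) j) * Real.log (1 + ε)
      ≤ Real.log (Y s j) := by
    intro j
    rw [hY, Real.log_prod (fun ℓ hℓ => by
      have := hf0 ℓ (Finset.mem_range.mp hℓ) j; nlinarith)]
    rw [Finset.sum_mul]
    apply Finset.sum_le_sum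
    intro ℓ hℓ
    have hℓs := Finset.mem_range.mp hℓ
    have h0 := hf0 ℓ hℓs j
    have h1 := hf1 ℓ hℓs j
    have hber := rpow_one_add_le_one_add_mul_self (s := ε) (by linarith) h0 h1
    have hlog := Real.log_le_log (Real.rpow_pos_of_pos h1ε _) hber
    rw [Real.log_rpow h1ε] at hlog
    calc f (x ℓ) j * Real.log (1 + ε) ≤ Real.log (1 + f (x ℓ) j * ε) := hlog
      _ = Real.log (1 + ε * f (x ℓ) j) := by ring_nf
  -- upper bound on log of the sum, by induction
  have hup : ∀ t ≤ s, Real.log (∑ j, Y t j)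
      ≤ Real.log m + ε * ∑ ℓ ∈ Finset.range t, v ℓ := by
    intro t
    induction t with
    | zero =>
      intro _
      simp [hY]
    | succ t ih =>
      intro ht
      have hts : t < s := ht
      have hD := hSpos t hts.le
      have hstep : (∑ j, Y (t+1) j) = (∑ j, Y t j) * (1 + ε * v t) := by
        have hYsucc : ∀ j, Y (t+1) j = Y t j * (1 + ε * f (x t) j) := by
          intro j
          rw [hY, hY, Finset.prod_range_succ]
        rw [hv t hts]
        have : (∑ j, Y (t+1) j)
            = (∑ j, Y t j) + ε * ∑ j, Y t j * f (x t) j := by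
          simp only [hYsucc, mul_add, mul_one, Finset.sum_add_distrib, Finset.mul_sum]
          congr 1
          exact Finset.sum_congr rfl fun j _ => by ring
        rw [this]
        field_simp
      have hvt := hvnn t hts
      have h1v : (0:ℝ) < 1 + ε * v t := by nlinarith
      rw [hstep, Real.log_mul hD.ne' h1v.ne']
      have hlogv : Real.log (1 + ε * v t) ≤ ε * v t := by
        have := Real.log_le_sub_one_of_pos h1v
        linarith
      have := ih hts.le
      rw [Finset.sum_range_succ]
      linarith
  -- pick the maximizing coordinate
  obtain ⟨j₀, hj₀⟩ := exists_eq_ciSup_of_finite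
    (f := fun j : Fin m => (1 / (s : ℝ)) * ∑ ℓ ∈ Finset.range s, f (x ℓ) j)
  rw [← hlambar] at hj₀
  have hFj₀ : (∑ ℓ ∈ Finset.range s, f (x ℓ) j₀) = (s:ℝ) * lambar := by
    have := hj₀
    field_simp at this
    linarith
  -- Y s j₀ ≤ sum
  have hYle : Y s j₀ ≤ ∑ j, Y s j :=
    Finset.single_le_sum (f := fun j => Y s j) (fun j _ => (hYpos s le_rfl j).le)
      (Finset.mem_univ j₀)
  have hloglog : Real.log (Y s j₀) ≤ Real.log (∑ j, Y s j) :=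
    Real.log_le_log (hYpos s le_rfl j₀) hYle
  have hsumv : (∑ ℓ ∈ Finset.range s, v ℓ) = (s:ℝ) * vbar := by
    rw [hvbar]; field_simp
  -- key inequality
  have hkey : (s:ℝ) * lambar * Real.log (1 + ε)
      ≤ Real.log m + ε * ((s:ℝ) * vbar) := by
    have h1 := hlow j₀
    rw [hFj₀] at h1
    have h2 := hup s le_rfl
    rw [hsumv] at h2
    linarith
  -- from hs : log m ≤ s * lamstar * b / (1+ε) ≤ s * lambar * b / (1+ε)
  have hlogm : (1 + ε) * Real.log m
      ≤ (s:ℝ) * (lamstar * ((1 + ε) * Real.log (1 + ε) - ε)) := by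
    have hd : 0 < lamstar * ((1 + ε) * Real.log (1 + ε) - ε) := mul_pos hlamstar hbpos
    have := (div_le_iff₀ hd).mp hs
    linarith
  have hlam2 : (s:ℝ) * (lamstar * ((1 + ε) * Real.log (1 + ε) - ε))
      ≤ (s:ℝ) * (lambar * ((1 + ε) * Real.log (1 + ε) - ε)) := by
    apply mul_le_mul_of_nonneg_left _ hsR.le
    exact mul_le_mul_of_nonneg_right hle hbpos.le
  -- final arithmetic
  have hfin : (1 + ε) * ((s:ℝ) * lambar * Real.log (1 + ε))
      ≤ (s:ℝ) * (lambar * ((1 + ε) * Real.log (1 + ε) - ε))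
        + (1 + ε) * (ε * ((s:ℝ) * vbar)) := by
    nlinarith [hkey]
  -- s * lambar * ε ≤ (1+ε) * ε * s * vbar
  have : (s:ℝ) * lambar * ε ≤ (1 + ε) * (ε * ((s:ℝ) * vbar)) := by nlinarith
  have hεs : 0 < ε * (s:ℝ) := mul_pos hε hsR
  nlinarith
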